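/- Let f = Σ_{ν∈ℤⁿ} a_ν ν ∈ ℂ[ℤⁿ] be finitely supported such that its associated Laurent polynomial f(z) = Σ_ν a_ν z^ν does not vanish at any point of the torus Tⁿ. Then (1/2)·⟨(log(r(f) r(f)*)) δ_0, δ_0⟩ = ∫_{Tⁿ} log |f(z)| dμ(z), where μ is the normalized Haar measure on Tⁿ; equivalently, the Fuglede–Kadison determinant det f = exp((1/2)⟨(log(r(f) r(f)*)) δ_0, δ_0⟩) equals the exponential of the logarithmic Mahler measure of f. -/

import Mathlib

open Filter MeasureTheory ComplexConjugate
open scoped ENNReal Real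

/-- The Hilbert space `ℓ²(ℤⁿ)` of square-summable complex valued functions on `ℤⁿ`. -/
abbrev l2Zn (n : ℕ) : Type _ := lp (fun _ : (Fin n → ℤ) => ℂ) 2

instance l2Zn.instCFCReal (n : ℕ) :
    ContinuousFunctionalCalculus ℝ (l2Zn n →L[ℂ] l2Zn n) IsSelfAdjoint :=
  IsSelfAdjoint.instContinuousFunctionalCalculus

/-- The character `u ↦ exp(2πi m·u)` on the `n`-torus. -/
noncomputable def charFn {n : ℕ} (m : Fin n → ℤ) (u : Fin n → ℝ) : ℂ :=
  Complex.exp (2 * π * Complex.I * ∑ i, (m i : ℂ) * (u i : ℂ))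

lemma charFn_add {n : ℕ} (m k : Fin n → ℤ) (u : Fin n → ℝ) :
    charFn (m + k) u = charFn m u * charFn k u := by
  unfold charFn
  rw [← Complex.exp_add, ← mul_add, ← Finset.sum_add_distrib]
  congr 2
  exact Finset.sum_congr rfl fun i _ => by push_cast [Pi.add_apply]; ring

lemma conj_charFn {n : ℕ} (m : Fin n → ℤ) (u : Fin n → ℝ) :
    conj (charFn m u) = charFn (-m) u := by
  unfold charFn
  rw [← Complex.exp_conj]
  congr 1
  rw [map_mul, map_sum]
  simp only [map_mul, Complex.conj_ofReal, Complex.conj_I, map_ofNat, map_intCast,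
    Pi.neg_apply, Int.cast_neg]
  rw [Finset.mul_sum, Finset.mul_sum]
  exact Finset.sum_congr rfl fun i _ => by ring

lemma continuous_charFn {n : ℕ} (m : Fin n → ℤ) : Continuous (charFn m) := by
  unfold charFn
  exact Complex.continuous_exp.comp <| continuous_const.mul <| continuous_finset_sum _
    fun i _ => continuous_const.mul (Complex.continuous_ofReal.comp (continuous_apply i))

lemma charFn_zero {n : ℕ} (u : Fin n → ℝ) : charFn 0 u = 1 := by
  simp [charFn]

lemma abs_charFn {n : ℕ} (m : Fin n → ℤ) (u : Fin n → ℝ) :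
    ‖charFn m u‖ = 1 := by
  unfold charFn
  rw [Complex.norm_exp]
  convert Real.exp_zero using 2
  have : (∑ i, (m i : ℂ) * (u i : ℂ)) = ((∑ i, (m i : ℝ) * u i : ℝ) : ℂ) := by
    push_cast; ring
  rw [this]
  simp [Complex.mul_re, Complex.mul_im]

lemma oneVarInt (k : ℤ) :
    ∫ t in Set.Icc (0:ℝ) 1, Complex.exp (2 * π * Complex.I * k * t) =
      if k = 0 then 1 else 0 := by
  rcases eq_or_ne k 0 with hk | hk
  · subst hk
    simp [Real.volume_Icc]
  · rw [if_neg hk, MeasureTheory.integral_Icc_eq_integral_Ioc,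
      ← intervalIntegral.integral_of_le zero_le_one]
    have hc : (2 * π * Complex.I * k : ℂ) ≠ 0 := by
      simp [Real.pi_ne_zero, Complex.I_ne_zero, hk]
    have := integral_exp_mul_complex (a := 0) (b := 1) hc
    simp only [mul_assoc] at this ⊢
    rw [this]
    have h1 : Complex.exp (2 * ((π:ℂ) * (Complex.I * ((k:ℂ) * ((1:ℝ):ℂ))))) = 1 := by
      have := Complex.exp_int_mul_two_pi_mul_I k
      rw [← this]
      push_cast
      ring_nf
    have h0 : Complex.exp (2 * ((π:ℂ) * (Complex.I * ((k:ℂ) * ((0:ℝ):ℂ))))) = 1 := by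
      norm_num
    rw [h1, h0, sub_self, zero_div]

lemma prodFactorInt (n : ℕ) (F : Fin n → ℝ → ℂ) :
    ∫ u in Set.Icc (0 : Fin n → ℝ) 1, ∏ i, F i (u i) =
      ∏ i, ∫ t in Set.Icc (0:ℝ) 1, F i t := by
  have h1 : (Set.Icc (0 : Fin n → ℝ) 1) = Set.pi Set.univ fun _ => Set.Icc (0:ℝ) 1 :=
    (Set.pi_univ_Icc _ _).symm
  have hmeas : MeasurableSet (Set.Icc (0 : Fin n → ℝ) 1) := measurableSet_Icc
  rw [← MeasureTheory.integral_indicator hmeas]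
  have key : (Set.Icc (0 : Fin n → ℝ) 1).indicator (fun u => ∏ i, F i (u i)) =
      fun u => ∏ i, (Set.Icc (0:ℝ) 1).indicator (F i) (u i) := by
    funext u
    by_cases hu : u ∈ Set.Icc (0 : Fin n → ℝ) 1
    · rw [Set.indicator_of_mem hu]
      rw [h1] at hu
      exact Finset.prod_congr rfl fun i _ =>
        (Set.indicator_of_mem (hu i (Set.mem_univ i)) _).symm
    · rw [Set.indicator_of_notMem hu]
      rw [h1, Set.mem_pi] at hu
      push_neg at hu
      obtain ⟨i, -, hi⟩ := hu
      exact (Finset.prod_eq_zero (Finset.mem_univ i)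
        (by rw [Set.indicator_of_notMem hi])).symm
  rw [key, MeasureTheory.integral_fintype_prod_volume_eq_prod
    (f := fun i t => (Set.Icc (0:ℝ) 1).indicator (F i) t)]
  exact Finset.prod_congr rfl fun i _ => MeasureTheory.integral_indicator measurableSet_Icc

lemma charFnInt {n : ℕ} (m : Fin n → ℤ) :
    ∫ u in Set.Icc (0 : Fin n → ℝ) 1, charFn m u = if m = 0 then 1 else 0 := by
  have hfac : ∀ u : Fin n → ℝ, charFn m u =
      ∏ i, Complex.exp (2 * π * Complex.I * (m i) * (u i)) := by
    intro u
    unfold charFn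
    rw [← Complex.exp_sum]
    congr 1
    rw [Finset.mul_sum]
    exact Finset.sum_congr rfl fun i _ => by ring
  calc ∫ u in Set.Icc (0 : Fin n → ℝ) 1, charFn m u
      = ∫ u in Set.Icc (0 : Fin n → ℝ) 1,
          ∏ i, Complex.exp (2 * π * Complex.I * (m i) * (u i)) :=
        integral_congr_ae (Filter.Eventually.of_forall fun u => hfac u)
    _ = ∏ i, ∫ t in Set.Icc (0:ℝ) 1, Complex.exp (2 * π * Complex.I * (m i) * t) :=
        prodFactorInt n (fun i t => Complex.exp (2 * π * Complex.I * (m i) * t))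
    _ = ∏ i, if m i = 0 then (1:ℂ) else 0 := Finset.prod_congr rfl fun i _ => oneVarInt (m i)
    _ = if m = 0 then 1 else 0 := by
        by_cases hm : m = 0
        · simp [hm]
        · rw [if_neg hm]
          obtain ⟨i, hi⟩ : ∃ i, m i ≠ 0 := by
            by_contra h
            push_neg at h
            exact hm (funext h)
          exact Finset.prod_eq_zero (Finset.mem_univ i) (if_neg hi)

set_option maxHeartbeats 2000000 in
/-- **Equation (1) of the paper** (Lück, Example 3.13): if the Laurent polynomial
`f(z) = ∑_ν a_ν z^ν` of a finitely supported `f ∈ ℂ[ℤⁿ]` does not vanish on the torus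
`Tⁿ`, then `log det_{NΓ} f = (1/2)⟨(log (r(f) r(f)^*)) δ_0, δ_0⟩` equals the logarithmic
Mahler measure `∫_{Tⁿ} log |f(z)| dμ(z)`, the torus being parametrized by
`z_j = exp(2πi t_j)`, `t ∈ [0,1]ⁿ`, with `μ` the normalized Haar measure. -/
theorem FK_determinant_eq_mahler_measure (n : ℕ) (f : (Fin n → ℤ) →₀ ℂ)
    (hf : ∀ z : Fin n → ℂ, (∀ i, ‖z i‖ = 1) →
      (∑ ν ∈ f.support, f ν * ∏ i, z i ^ (ν i)) ≠ 0)
    (R : l2Zn n →L[ℂ] l2Zn n)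
    (hR : ∀ (x : l2Zn n) (m : Fin n → ℤ), R x m = ∑ ν ∈ f.support, f ν * x (m + ν)) :
    ∃ t : ℝ,
      (t : ℂ) = (cfc Real.log (R * ContinuousLinearMap.adjoint R))
          (lp.single 2 (0 : Fin n → ℤ) 1) (0 : Fin n → ℤ) ∧
      t / 2 = ∫ u in Set.Icc (0 : Fin n → ℝ) 1,
        Real.log ‖∑ ν ∈ f.support,
          f ν * Complex.exp (2 * π * Complex.I * ∑ i, (ν i : ℂ) * (u i : ℂ))‖ := by
  classical
  -- notation
  set A : l2Zn n →L[ℂ] l2Zn n := R * ContinuousLinearMap.adjoint R with hA_def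
  set δ : (Fin n → ℤ) → l2Zn n := fun j => lp.single 2 j 1 with hδ_def
  set F : (Fin n → ℝ) → ℂ := fun u => ∑ ν ∈ f.support, f ν * charFn ν u with hF_def
  set g : (Fin n → ℝ) → ℝ := fun u => ‖F u‖ ^ 2 with hg_def
  have contF : Continuous F := continuous_finset_sum _ fun ν _ =>
    continuous_const.mul (continuous_charFn ν)
  have contg : Continuous g := (continuous_norm.comp contF).pow 2
  have hcpt : IsCompact (Set.Icc (0 : Fin n → ℝ) 1) := isCompact_Icc
  have hg_nonneg : ∀ u, 0 ≤ g u := fun u => sq_nonneg _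
  have gC : ∀ u, ((g u : ℝ) : ℂ) = F u * conj (F u) := by
    intro u
    show ((‖F u‖ ^ 2 : ℝ) : ℂ) = _
    rw [← Complex.normSq_eq_norm_sq, Complex.mul_conj]
  -- coordinates of lp elements via inner products with δ
  have coord : ∀ (x : l2Zn n) (m : Fin n → ℤ), (inner (𝕜 := ℂ) (δ m) x : ℂ) = x m := by
    intro x m
    rw [hδ_def, lp.inner_single_left]
    simp
  -- the coordinates of `R` on singles
  have hRsingle : ∀ (m j : Fin n → ℤ), (R (δ m)) j =
      ∑ ν ∈ f.support, f ν * (if j = m - ν then 1 else 0) := by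
    intro m j
    rw [hR]
    refine Finset.sum_congr rfl fun ν _ => ?_
    congr 1
    rcases eq_or_ne j (m - ν) with h | h
    · subst h
      rw [if_pos rfl, hδ_def]
      simp only [sub_add_cancel]
      exact lp.single_apply_self _ _ _
    · rw [if_neg h, hδ_def]
      refine lp.single_apply_ne _ _ _ ?_
      intro hc
      exact h (by rw [← hc]; abel)
  -- the coordinates of the adjoint of `R`
  have hadj : ∀ (x : l2Zn n) (m : Fin n → ℤ),
      (ContinuousLinearMap.adjoint R x) m = ∑ ν ∈ f.support, conj (f ν) * x (m - ν) := by
    intro x m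
    have h0 : (ContinuousLinearMap.adjoint R x) m
        = (inner (𝕜 := ℂ) (δ m) (ContinuousLinearMap.adjoint R x) : ℂ) := (coord _ _).symm
    rw [h0, ContinuousLinearMap.adjoint_inner_right, lp.inner_eq_tsum]
    simp only [RCLike.inner_apply']
    set s := f.support.image (fun ν => m - ν) with hs_def
    have hside : ∀ j ∉ s, conj ((R (δ m)) j) * x j = 0 := by
      intro j hj
      have : (R (δ m)) j = 0 := by
        rw [hRsingle]
        refine Finset.sum_eq_zero fun ν hν => ?_
        rw [if_neg, mul_zero]
        intro hc
        exact hj (hc ▸ Finset.mem_image_of_mem _ hν)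
      rw [this, map_zero, zero_mul]
    rw [tsum_eq_sum hside]
    calc ∑ j ∈ s, conj ((R (δ m)) j) * x j
        = ∑ j ∈ s, ∑ ν ∈ f.support, conj (f ν) * (if j = m - ν then 1 else 0) * x j := by
          refine Finset.sum_congr rfl fun j _ => ?_
          rw [hRsingle, map_sum, Finset.sum_mul]
          refine Finset.sum_congr rfl fun ν _ => ?_
          rw [map_mul, apply_ite conj, map_one, map_zero]
      _ = ∑ ν ∈ f.support, ∑ j ∈ s, conj (f ν) * (if j = m - ν then 1 else 0) * x j :=
          Finset.sum_comm
      _ = ∑ ν ∈ f.support, conj (f ν) * x (m - ν) := by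
          refine Finset.sum_congr rfl fun ν hν => ?_
          have h1 : ∀ j, conj (f ν) * (if j = m - ν then 1 else 0) * x j
              = if j = m - ν then conj (f ν) * x j else 0 := by
            intro j; split_ifs <;> ring
          simp only [h1]
          rw [Finset.sum_ite_eq' s (m - ν) (fun j => conj (f ν) * x j),
            if_pos (Finset.mem_image_of_mem _ hν)]
  -- the coordinates of A
  have hA_apply : ∀ (x : l2Zn n) (m : Fin n → ℤ), (A x) m =
      ∑ ν ∈ f.support, ∑ μ ∈ f.support, f ν * (conj (f μ) * x (m + ν - μ)) := by
    intro x m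
    have : (A x) m = (R (ContinuousLinearMap.adjoint R x)) m := rfl
    rw [this, hR]
    refine Finset.sum_congr rfl fun ν _ => ?_
    rw [hadj, Finset.mul_sum]
  -- integrability helper
  have integr : ∀ (h : (Fin n → ℝ) → ℂ), Continuous h →
      IntegrableOn h (Set.Icc (0 : Fin n → ℝ) 1) volume := fun h hh =>
    hh.continuousOn.integrableOn_compact hcpt
  -- moments of A
  have MOMk : ∀ (k : ℕ) (j m : Fin n → ℤ), ((A ^ k) (δ j)) m =
      ∫ u in Set.Icc (0 : Fin n → ℝ) 1, ((g u : ℝ) : ℂ) ^ k * charFn (m - j) u := by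
    intro k
    induction k with
    | zero =>
      intro j m
      simp only [pow_zero, ContinuousLinearMap.one_apply, one_mul]
      rw [charFnInt]
      rcases eq_or_ne m j with h | h
      · subst h
        rw [if_pos (sub_self m), hδ_def]
        exact lp.single_apply_self _ _ _
      · rw [if_neg (sub_ne_zero_of_ne h), hδ_def]
        exact lp.single_apply_ne _ _ _ h
    | succ k ih =>
      intro j m
      have contInt : ∀ (ν μ : Fin n → ℤ), Continuous (fun u : Fin n → ℝ =>
          f ν * (conj (f μ) * (((g u : ℝ) : ℂ) ^ k * charFn (m + ν - μ - j) u))) := by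
        intro ν μ
        exact continuous_const.mul (continuous_const.mul
          (((Complex.continuous_ofReal.comp contg).pow k).mul (continuous_charFn _)))
      calc ((A ^ (k + 1)) (δ j)) m = (A ((A ^ k) (δ j))) m := by
            rw [pow_succ', ContinuousLinearMap.mul_apply]
        _ = ∑ ν ∈ f.support, ∑ μ ∈ f.support, f ν * (conj (f μ) *
              ∫ u in Set.Icc (0 : Fin n → ℝ) 1,
                ((g u : ℝ) : ℂ) ^ k * charFn (m + ν - μ - j) u) := by
            rw [hA_apply]
            exact Finset.sum_congr rfl fun ν _ => Finset.sum_congr rfl fun μ _ => by rw [ih]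
        _ = ∑ ν ∈ f.support, ∑ μ ∈ f.support, ∫ u in Set.Icc (0 : Fin n → ℝ) 1,
              f ν * (conj (f μ) * (((g u : ℝ) : ℂ) ^ k * charFn (m + ν - μ - j) u)) := by
            refine Finset.sum_congr rfl fun ν _ => Finset.sum_congr rfl fun μ _ => ?_
            rw [MeasureTheory.integral_const_mul, MeasureTheory.integral_const_mul]
        _ = ∫ u in Set.Icc (0 : Fin n → ℝ) 1, ∑ ν ∈ f.support, ∑ μ ∈ f.support,
              f ν * (conj (f μ) * (((g u : ℝ) : ℂ) ^ k * charFn (m + ν - μ - j) u)) := by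
            rw [MeasureTheory.integral_finset_sum _ (fun ν _ => ?_)]
            · exact Finset.sum_congr rfl fun ν _ =>
                (MeasureTheory.integral_finset_sum _ fun μ _ =>
                  integr _ (contInt ν μ)).symm
            · exact MeasureTheory.integrable_finset_sum _ fun μ _ => integr _ (contInt ν μ)
        _ = ∫ u in Set.Icc (0 : Fin n → ℝ) 1, ((g u : ℝ) : ℂ) ^ (k + 1) * charFn (m - j) u := by
            refine MeasureTheory.integral_congr_ae (Filter.Eventually.of_forall fun u => ?_)
            have hconjF : conj (F u) = ∑ μ ∈ f.support, conj (f μ) * charFn (-μ) u := by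
              rw [hF_def]
              simp only [map_sum, map_mul]
              exact Finset.sum_congr rfl fun μ _ => by rw [conj_charFn]
            have hchar : ∀ (ν μ : Fin n → ℤ), charFn (m + ν - μ - j) u =
                charFn (m - j) u * (charFn ν u * charFn (-μ) u) := by
              intro ν μ
              rw [← charFn_add, ← charFn_add]
              congr 1
              abel
            calc ∑ ν ∈ f.support, ∑ μ ∈ f.support,
                  f ν * (conj (f μ) * (((g u : ℝ) : ℂ) ^ k * charFn (m + ν - μ - j) u))
                = ((g u : ℝ) : ℂ) ^ k * charFn (m - j) u *
                    ∑ ν ∈ f.support, ∑ μ ∈ f.support,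
                      (f ν * charFn ν u) * (conj (f μ) * charFn (-μ) u) := by
                  rw [Finset.mul_sum]
                  refine Finset.sum_congr rfl fun ν _ => ?_
                  rw [Finset.mul_sum]
                  refine Finset.sum_congr rfl fun μ _ => ?_
                  rw [hchar]
                  ring
              _ = ((g u : ℝ) : ℂ) ^ k * charFn (m - j) u * (F u * conj (F u)) := by
                  rw [← Finset.sum_mul_sum, hconjF, hF_def]
              _ = ((g u : ℝ) : ℂ) ^ (k + 1) * charFn (m - j) u := by
                  rw [← gC, pow_succ]
                  ring
  -- selfadjointness of A
  have hAsa : IsSelfAdjoint A := by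
    rw [hA_def, ← ContinuousLinearMap.star_eq_adjoint]
    exact IsSelfAdjoint.mul_star_self R
  -- nontriviality
  haveI hNT : Nontrivial (l2Zn n) := by
    refine ⟨0, δ 0, fun h => ?_⟩
    have := congrArg (fun x : l2Zn n => (x : (Fin n → ℤ) → ℂ) 0) h
    simp [hδ_def, lp.single_apply] at this
  -- norm of δ j and coordinate bounds
  have hnormδ : ∀ j : Fin n → ℤ, ‖δ j‖ = 1 := by
    intro j
    rw [hδ_def]
    have := lp.norm_single (E := fun _ : Fin n → ℤ => ℂ) (p := (2 : ℝ≥0∞)) (by norm_num) j (1 : ℂ)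
    simpa using this
  have coordBound : ∀ (y : l2Zn n) (m : Fin n → ℤ), ‖y m‖ ≤ ‖y‖ := by
    intro y m
    have := lp.norm_apply_le_norm (E := fun _ : (Fin n → ℤ) => ℂ)
      (p := (2 : ℝ≥0∞)) (by norm_num) y m
    simpa using this
  -- polynomial moments
  have PMOM : ∀ (p : Polynomial ℝ) (j m : Fin n → ℤ),
      ((cfc (fun x : ℝ => Polynomial.eval x p) A) (δ j)) m =
        ∫ u in Set.Icc (0 : Fin n → ℝ) 1,
          ((Polynomial.eval (g u) p : ℝ) : ℂ) * charFn (m - j) u := by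
    intro p j m
    have hfun : (fun x : ℝ => Polynomial.eval x p) =
        ∑ k ∈ Finset.range (p.natDegree + 1), (fun x : ℝ => p.coeff k • x ^ k) := by
      funext x
      rw [Finset.sum_apply]
      rw [Polynomial.eval_eq_sum_range]
      simp [smul_eq_mul]
    rw [hfun, cfc_sum _ A _ (fun k _ => by fun_prop)]
    have hterm : ∀ k, cfc (fun x : ℝ => p.coeff k • x ^ k) A = p.coeff k • A ^ k := by
      intro k
      rw [cfc_smul (p.coeff k) (fun x : ℝ => x ^ k) A (by fun_prop), cfc_pow_id A k hAsa]
    calc ((∑ k ∈ Finset.range (p.natDegree + 1), cfc (fun x : ℝ => p.coeff k • x ^ k) A)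
            (δ j)) m
        = ∑ k ∈ Finset.range (p.natDegree + 1), ((p.coeff k • A ^ k) (δ j)) m := by
          rw [ContinuousLinearMap.sum_apply]
          rw [lp.coeFn_sum, Finset.sum_apply]
          exact Finset.sum_congr rfl fun k _ => by rw [hterm]
      _ = ∑ k ∈ Finset.range (p.natDegree + 1),
            ((p.coeff k : ℂ) * ∫ u in Set.Icc (0 : Fin n → ℝ) 1,
              ((g u : ℝ) : ℂ) ^ k * charFn (m - j) u) := by
          refine Finset.sum_congr rfl fun k _ => ?_
          rw [ContinuousLinearMap.smul_apply, lp.coeFn_smul, Pi.smul_apply, MOMk k j m]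
          rw [Complex.real_smul]
      _ = ∑ k ∈ Finset.range (p.natDegree + 1),
            ∫ u in Set.Icc (0 : Fin n → ℝ) 1,
              (p.coeff k : ℂ) * (((g u : ℝ) : ℂ) ^ k * charFn (m - j) u) := by
          exact Finset.sum_congr rfl fun k _ => (MeasureTheory.integral_const_mul _ _).symm
      _ = ∫ u in Set.Icc (0 : Fin n → ℝ) 1, ∑ k ∈ Finset.range (p.natDegree + 1),
            (p.coeff k : ℂ) * (((g u : ℝ) : ℂ) ^ k * charFn (m - j) u) := by
          refine (MeasureTheory.integral_finset_sum _ fun k _ => integr _ ?_).symm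
          exact continuous_const.mul
            (((Complex.continuous_ofReal.comp contg).pow k).mul (continuous_charFn _))
      _ = ∫ u in Set.Icc (0 : Fin n → ℝ) 1,
            ((Polynomial.eval (g u) p : ℝ) : ℂ) * charFn (m - j) u := by
          refine MeasureTheory.integral_congr_ae (Filter.Eventually.of_forall fun u => ?_)
          dsimp only
          rw [Polynomial.eval_eq_sum_range]
          push_cast
          rw [Finset.sum_mul]
          exact Finset.sum_congr rfl fun k _ => by ring
  -- moments of continuous functions of A
  have MOM : ∀ (l M' : ℝ), spectrum ℝ A ⊆ Set.Icc l M' →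
      (∀ u ∈ Set.Icc (0 : Fin n → ℝ) 1, g u ∈ Set.Icc l M') →
      ∀ (φ : ℝ → ℝ), ContinuousOn φ (Set.Icc l M') →
      ∀ (j m : Fin n → ℤ), ((cfc φ A) (δ j)) m =
        ∫ u in Set.Icc (0 : Fin n → ℝ) 1, ((φ (g u) : ℝ) : ℂ) * charFn (m - j) u := by
    intro l M' hspec hgmem φ hφ j m
    have hφspec : ContinuousOn φ (spectrum ℝ A) := hφ.mono hspec
    have hφg : ContinuousOn (fun u => ((φ (g u) : ℝ) : ℂ) * charFn (m - j) u)
        (Set.Icc (0 : Fin n → ℝ) 1) := by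
      refine ContinuousOn.mul ?_ (continuous_charFn _).continuousOn
      exact Complex.continuous_ofReal.comp_continuousOn
        (hφ.comp contg.continuousOn fun u hu => hgmem u hu)
    refine eq_of_forall_dist_le fun ε hε => ?_
    obtain ⟨p, hp⟩ := exists_polynomial_near_of_continuousOn l M' φ hφ (ε / 2)
      (by linarith)
    have hpcont : ContinuousOn (fun x : ℝ => Polynomial.eval x p) (spectrum ℝ A) :=
      p.continuous.continuousOn
    have hOp : ‖((cfc φ A) (δ j)) m
        - ((cfc (fun x : ℝ => Polynomial.eval x p) A) (δ j)) m‖ ≤ ε / 2 := by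
      have h1 : ((cfc φ A) (δ j)) m - ((cfc (fun x : ℝ => Polynomial.eval x p) A) (δ j)) m
          = (((cfc φ A - cfc (fun x : ℝ => Polynomial.eval x p) A)) (δ j)) m := by
        rw [ContinuousLinearMap.sub_apply, lp.coeFn_sub, Pi.sub_apply]
      rw [h1]
      refine le_trans (coordBound _ _) ?_
      refine le_trans ((cfc φ A - cfc (fun x : ℝ => Polynomial.eval x p) A).le_opNorm _) ?_
      rw [hnormδ, mul_one]
      rw [← cfc_sub φ (fun x : ℝ => Polynomial.eval x p) A hφspec hpcont]
      refine norm_cfc_le (by linarith) fun x hx => ?_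
      have := hp x (hspec hx)
      rw [Real.norm_eq_abs, abs_sub_comm]
      linarith
    have hInt : ‖(∫ u in Set.Icc (0 : Fin n → ℝ) 1,
          ((Polynomial.eval (g u) p : ℝ) : ℂ) * charFn (m - j) u)
        - ∫ u in Set.Icc (0 : Fin n → ℝ) 1, ((φ (g u) : ℝ) : ℂ) * charFn (m - j) u‖
        ≤ ε / 2 := by
      have hi1 : IntegrableOn (fun u => ((Polynomial.eval (g u) p : ℝ) : ℂ) * charFn (m - j) u)
          (Set.Icc (0 : Fin n → ℝ) 1) volume :=
        integr _ ((Complex.continuous_ofReal.comp (p.continuous.comp contg)).mul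
          (continuous_charFn _))
      have hi2 : IntegrableOn (fun u => ((φ (g u) : ℝ) : ℂ) * charFn (m - j) u)
          (Set.Icc (0 : Fin n → ℝ) 1) volume := hφg.integrableOn_compact hcpt
      rw [← MeasureTheory.integral_sub hi1 hi2]
      have hb := MeasureTheory.norm_setIntegral_le_of_norm_le_const (C := ε / 2)
        (f := fun u => ((Polynomial.eval (g u) p : ℝ) : ℂ) * charFn (m - j) u
          - ((φ (g u) : ℝ) : ℂ) * charFn (m - j) u)
        (μ := volume) (s := Set.Icc (0 : Fin n → ℝ) 1)
        measure_Icc_lt_top ?_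
      · refine le_trans hb ?_
        rw [measureReal_def, Real.volume_Icc_pi_toReal (by intro i; exact zero_le_one)]
        simp
      · intro u hu
        have : ((Polynomial.eval (g u) p : ℝ) : ℂ) * charFn (m - j) u
            - ((φ (g u) : ℝ) : ℂ) * charFn (m - j) u
            = ((Polynomial.eval (g u) p - φ (g u) : ℝ) : ℂ) * charFn (m - j) u := by
          push_cast
          ring
        rw [this, norm_mul, abs_charFn, mul_one,
          Complex.norm_real, Real.norm_eq_abs]
        exact le_of_lt (hp (g u) (hgmem u hu))
    rw [Complex.dist_eq]
    refine le_trans (norm_sub_le_norm_sub_add_norm_sub _ (((cfc (fun x : ℝ => Polynomial.eval x p) A) (δ j)) m)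
      _) ?_
    have h2 : ‖((cfc (fun x : ℝ => Polynomial.eval x p) A) (δ j)) m
        - ∫ u in Set.Icc (0 : Fin n → ℝ) 1, ((φ (g u) : ℝ) : ℂ) * charFn (m - j) u‖ ≤ ε / 2 := by
      rw [PMOM p j m]
      exact hInt
    linarith
  -- bound on g and the spectrum
  have habsF : ∀ u, ‖F u‖ ≤ ∑ ν ∈ f.support, ‖f ν‖ := by
    intro u
    rw [hF_def]
    refine le_trans (norm_sum_le _ _) ?_
    refine Finset.sum_le_sum fun ν _ => ?_
    rw [norm_mul, abs_charFn, mul_one]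
  set M : ℝ := max ‖A‖ ((∑ ν ∈ f.support, ‖f ν‖) ^ 2) with hM_def
  have hM0 : (0:ℝ) ≤ M := le_trans (norm_nonneg A) (le_max_left _ _)
  have hgM : ∀ u, g u ≤ M := by
    intro u
    rw [hg_def]
    refine le_trans ?_ (le_max_right _ _)
    exact pow_le_pow_left₀ (norm_nonneg _) (habsF u) 2
  have hg1 : ∀ u ∈ Set.Icc (0 : Fin n → ℝ) 1, g u ∈ Set.Icc (-M) M := fun u _ =>
    ⟨le_trans (neg_nonpos.2 hM0) (hg_nonneg u), hgM u⟩
  have hspec1 : spectrum ℝ A ⊆ Set.Icc (-M) M := by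
    intro s hs
    have hnorm : ‖s‖ ≤ ‖A‖ := spectrum.norm_le_norm_of_mem hs
    rw [Real.norm_eq_abs] at hnorm
    have hAM : ‖A‖ ≤ M := by rw [hM_def]; exact le_max_left _ _
    have h2 := abs_le.1 (le_trans hnorm hAM)
    exact ⟨h2.1, h2.2⟩
  -- minimum of g
  have h0mem : (0 : Fin n → ℝ) ∈ Set.Icc (0 : Fin n → ℝ) 1 :=
    Set.mem_Icc.2 ⟨le_rfl, fun i => zero_le_one⟩
  obtain ⟨u₀, hu₀mem, hu₀min'⟩ := hcpt.exists_isMinOn ⟨0, h0mem⟩ contg.continuousOn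
  have hu₀min : ∀ u ∈ Set.Icc (0 : Fin n → ℝ) 1, g u₀ ≤ g u := fun u hu => hu₀min' hu
  have hFu₀ : F u₀ ≠ 0 := by
    have habs1 : ∀ i, ‖Complex.exp (2 * π * Complex.I * (u₀ i))‖ = 1 := by
      intro i
      rw [Complex.norm_exp]
      convert Real.exp_zero using 2
      simp [Complex.mul_re]
    have hprod : ∀ ν : Fin n → ℤ,
        (∏ i, (Complex.exp (2 * π * Complex.I * (u₀ i))) ^ (ν i)) = charFn ν u₀ := by
      intro ν
      unfold charFn
      calc ∏ i, (Complex.exp (2 * π * Complex.I * (u₀ i))) ^ (ν i)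
          = ∏ i, Complex.exp ((ν i : ℂ) * (2 * π * Complex.I * (u₀ i))) :=
            Finset.prod_congr rfl fun i _ => (Complex.exp_int_mul _ _).symm
        _ = Complex.exp (∑ i, (ν i : ℂ) * (2 * π * Complex.I * (u₀ i))) :=
            (Complex.exp_sum _ _).symm
        _ = Complex.exp (2 * π * Complex.I * ∑ i, (ν i : ℂ) * (u₀ i : ℂ)) := by
            rw [Finset.mul_sum]
            congr 1
            exact Finset.sum_congr rfl fun i _ => by ring
    have := hf (fun i => Complex.exp (2 * π * Complex.I * (u₀ i))) habs1
    intro hc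
    refine this ?_
    rw [← hc, hF_def]
    exact Finset.sum_congr rfl fun ν _ => by rw [hprod]
  have hε₀ : 0 < g u₀ := by
    rw [hg_def]
    exact pow_pos (norm_pos_iff.mpr hFu₀) 2
  have hgIcc2 : ∀ u ∈ Set.Icc (0 : Fin n → ℝ) 1, g u ∈ Set.Icc (g u₀) M := fun u hu =>
    ⟨hu₀min u hu, hgM u⟩
  -- the spectrum is bounded below by the minimum of g
  have hspec2 : spectrum ℝ A ⊆ Set.Icc (g u₀) M := by
    intro s hs
    refine ⟨?_, (hspec1 hs).2⟩
    by_contra hlt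
    push_neg at hlt
    set φ : ℝ → ℝ := fun x => max 0 ((g u₀ - x) / (g u₀ - s)) with hφ_def
    have hφc : Continuous φ :=
      continuous_const.max ((continuous_const.sub continuous_id).div_const _)
    have hTzero : ∀ (j m : Fin n → ℤ), ((cfc φ A) (δ j)) m = 0 := by
      intro j m
      rw [MOM (-M) M hspec1 hg1 φ hφc.continuousOn j m]
      rw [MeasureTheory.setIntegral_congr_fun measurableSet_Icc
        (g := fun _ => (0:ℂ)) ?_]
      · simp
      · intro u hu
        have h1 : (g u₀ - g u) / (g u₀ - s) ≤ 0 :=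
          div_nonpos_of_nonpos_of_nonneg (by linarith [hu₀min u hu]) (by linarith)
        have h2 : φ (g u) = 0 := max_eq_left h1
        simp [h2]
    have hTall : cfc φ A = 0 := by
      have hsa : IsSelfAdjoint (cfc φ A) := cfc_predicate φ A
      refine ContinuousLinearMap.ext fun x => ?_
      refine lp.ext (funext fun m => ?_)
      have hTδ : (cfc φ A) (δ m) = 0 := by
        refine lp.ext (funext fun m' => ?_)
        rw [hTzero m m']
        simp [lp.coeFn_zero]
      have h1 : ((cfc φ A) x) m = (inner (𝕜 := ℂ) (δ m) ((cfc φ A) x) : ℂ) := (coord _ _).symm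
      have h2 : (inner (𝕜 := ℂ) (δ m) ((cfc φ A) x) : ℂ)
          = (inner (𝕜 := ℂ) ((cfc φ A) (δ m)) x : ℂ) := by
        conv_rhs => rw [← hsa.adjoint_eq]
        rw [ContinuousLinearMap.adjoint_inner_left]
      have h3 : ((cfc φ A) x) m = 0 := by
        rw [h1, h2, hTδ, inner_zero_left]
      rw [h3]
      simp [lp.coeFn_zero]
    have hmap : spectrum ℝ (cfc φ A) = φ '' spectrum ℝ A :=
      cfc_map_spectrum (R := ℝ) (f := φ) (a := A) hAsa hφc.continuousOn
    have h1 : φ s ∈ spectrum ℝ (cfc φ A) := by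
      rw [hmap]
      exact ⟨s, hs, rfl⟩
    rw [hTall, spectrum.zero_eq] at h1
    have hφs : φ s = 1 := by
      rw [hφ_def]
      simp only
      rw [div_self (ne_of_gt (sub_pos.2 hlt))]
      exact max_eq_right zero_le_one
    rw [hφs] at h1
    exact one_ne_zero (Set.mem_singleton_iff.1 h1)
  -- final computation
  have hlogcont : ContinuousOn Real.log (Set.Icc (g u₀) M) := by
    refine Real.continuousOn_log.mono fun x hx => ?_
    simp only [Set.mem_compl_iff, Set.mem_singleton_iff]
    exact ne_of_gt (lt_of_lt_of_le hε₀ hx.1)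
  have hfinal := MOM (g u₀) M hspec2 hgIcc2 Real.log hlogcont 0 0
  refine ⟨∫ u in Set.Icc (0 : Fin n → ℝ) 1, Real.log (g u), ?_, ?_⟩
  · show _ = ((cfc Real.log A) (δ 0)) (0 : Fin n → ℤ)
    rw [hfinal]
    have hchar0 : ∀ u : Fin n → ℝ,
        ((Real.log (g u) : ℝ) : ℂ) * charFn ((0 : Fin n → ℤ) - 0) u
          = ((Real.log (g u) : ℝ) : ℂ) := by
      intro u
      rw [sub_self, charFn_zero, mul_one]
    rw [MeasureTheory.integral_congr_ae (Filter.Eventually.of_forall hchar0)]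
    exact integral_ofReal.symm
  · have hint : ∀ u : Fin n → ℝ, Real.log (g u)
        = 2 * Real.log ‖F u‖ := by
      intro u
      rw [hg_def]
      simp only
      rw [Real.log_pow]
      push_cast
      ring
    have hsame : (∫ u in Set.Icc (0 : Fin n → ℝ) 1, Real.log (g u))
        = 2 * ∫ u in Set.Icc (0 : Fin n → ℝ) 1,
            Real.log ‖∑ ν ∈ f.support,
              f ν * Complex.exp (2 * π * Complex.I * ∑ i, (ν i : ℂ) * (u i : ℂ))‖ := by
      rw [MeasureTheory.integral_congr_ae (Filter.Eventually.of_forall hint)]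
      rw [MeasureTheory.integral_const_mul]
      rfl
    rw [hsame]
    ring
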